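/- For a strongly connected weighted directed graph with 𝓛 = Π(I − Wᵀ) and R = (I − Wᵀ)⁺Π⁻¹, and for all vectors p, r ∈ ℝⁿ with pᵀ1 = 0 and rᵀ1 = 0, it holds that pᵀ 𝓛⁺ r = pᵀ R r. -/
import Mathlib


open Matrix BigOperators

/-- The four Penrose equations characterizing the Moore–Penrose pseudoinverse. -/
def Penrose {m : Type*} [Fintype m] (M Mp : Matrix m m ℝ) : Prop :=
  M * Mp * M = M ∧ Mp * M * Mp = Mp ∧ (M * Mp)ᵀ = M * Mp ∧ (Mp * M)ᵀ = Mp * M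

/-- for a strongly connected weighted directed graph with
`𝓛 = Π(I − Wᵀ)` and `R = (I − Wᵀ)⁺Π⁻¹`, for all `p ⟂ 1` and `r ⟂ 1`,
`pᵀ 𝓛⁺ r = pᵀ R r`. -/
theorem stmt16
    (n : ℕ) (hn : 2 ≤ n)
    (A : Matrix (Fin n) (Fin n) ℝ)
    (hA : ∀ u v, 0 ≤ A u v)
    (hconn : ∀ u v : Fin n, Relation.ReflTransGen (fun a b => 0 < A a b) u v)
    (d : Fin n → ℝ) (hd : d = fun u => ∑ v, A u v) (hdpos : ∀ u, 0 < d u)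
    (W : Matrix (Fin n) (Fin n) ℝ)
    (hW : W = Aᵀ * Matrix.diagonal (fun u => (d u)⁻¹))
    (pdist : Fin n → ℝ) (hppos : ∀ v, 0 < pdist v) (hpsum : ∑ v, pdist v = 1)
    (hpstat : W.mulVec pdist = pdist)
    (calL : Matrix (Fin n) (Fin n) ℝ)
    (hcalL : calL = Matrix.diagonal pdist * (1 - Wᵀ))
    -- kernel assumptions (hold by strong connectivity):
    (hker1 : ∀ x : Fin n → ℝ,
      ((1 : Matrix (Fin n) (Fin n) ℝ) - Wᵀ).mulVec x = 0 ↔ ∃ c : ℝ, x = fun _ => c)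
    (hker2 : ∀ y : Fin n → ℝ,
      ((1 : Matrix (Fin n) (Fin n) ℝ) - W).mulVec y = 0 ↔ ∃ c : ℝ, y = c • pdist)
    (calLplus : Matrix (Fin n) (Fin n) ℝ) (hcalLplus : Penrose calL calLplus)
    -- `(I − Wᵀ)⁺` and `R = (I − Wᵀ)⁺ Π⁻¹`:
    (Bplus : Matrix (Fin n) (Fin n) ℝ)
    (hBplus : Penrose ((1 : Matrix (Fin n) (Fin n) ℝ) - Wᵀ) Bplus)
    (R : Matrix (Fin n) (Fin n) ℝ)
    (hR : R = Bplus * Matrix.diagonal (fun v => (pdist v)⁻¹)) :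
    ∀ p r : Fin n → ℝ, p ⬝ᵥ (fun _ => (1 : ℝ)) = 0 → r ⬝ᵥ (fun _ => (1 : ℝ)) = 0 →
      p ⬝ᵥ calLplus.mulVec r = p ⬝ᵥ R.mulVec r := by
  intro p r hp hr
  set B : Matrix (Fin n) (Fin n) ℝ := 1 - Wᵀ with hBdef
  have hpd : ∀ v, pdist v ≠ 0 := fun v => (hppos v).ne'
  have hrsum : ∑ j, r j = 0 := by simpa [dotProduct] using hr
  have hpsum0 : ∑ j, p j = 0 := by simpa [dotProduct] using hp
  obtain ⟨hL1, hL2, hL3, hL4⟩ := hcalLplus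
  obtain ⟨hB1, hB2, hB3, hB4⟩ := hBplus
  have hBT : Bᵀ = 1 - W := by
    simp [hBdef, transpose_sub]
  -- kernel of calLᵀ is the constants
  have hkerLT : ∀ v : Fin n → ℝ, calLᵀ *ᵥ v = 0 → ∃ c : ℝ, v = fun _ => c := by
    intro v hv
    have hLT : calLᵀ = Bᵀ * Matrix.diagonal pdist := by
      rw [hcalL, transpose_mul, Matrix.diagonal_transpose]
    rw [hLT, hBT, ← Matrix.mulVec_mulVec] at hv
    obtain ⟨c, hc⟩ := (hker2 _).1 hv
    refine ⟨c, funext fun i => ?_⟩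
    have h1 := congrFun hc i
    rw [Matrix.mulVec_diagonal] at h1
    have h2 : pdist i * v i = pdist i * c := by
      rw [h1]; simp [mul_comm]
    exact mul_left_cancel₀ (hpd i) h2
  -- kernel of Bᵀ is multiples of pdist
  have hkerBT : ∀ v : Fin n → ℝ, Bᵀ *ᵥ v = 0 → ∃ c : ℝ, v = c • pdist := by
    intro v hv
    rw [hBT] at hv
    exact (hker2 _).1 hv
  -- Step 1: calL * (calLplus *ᵥ r) = r
  set P : Matrix (Fin n) (Fin n) ℝ := 1 - calL * calLplus with hPdef
  have hPsymm : ∀ i j, P i j = P j i := by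
    intro i j
    have hPT : Pᵀ = P := by
      rw [hPdef, transpose_sub, transpose_one, hL3]
    have := congrFun (congrFun hPT i) j
    simpa [Matrix.transpose_apply] using this.symm
  have hLP : calLᵀ * P = 0 := by
    rw [hPdef, Matrix.mul_sub, mul_one]
    have h : calLᵀ * (calL * calLplus) = calLᵀ := by
      calc calLᵀ * (calL * calLplus) = calLᵀ * (calL * calLplus)ᵀ := by rw [hL3]
        _ = ((calL * calLplus) * calL)ᵀ := (transpose_mul _ _).symm
        _ = calLᵀ := by rw [hL1]
    rw [h, sub_self]
  have hPcol : ∀ j, ∃ c : ℝ, (fun i => P i j) = fun _ => c := by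
    intro j
    apply hkerLT
    funext i
    have h : (calLᵀ * P) i j = 0 := by rw [hLP]; rfl
    simpa [Matrix.mulVec, Matrix.mul_apply, dotProduct] using h
  have i0 : Fin n := ⟨0, by omega⟩
  have hPconst : ∀ i j, P i j = P i0 i0 := by
    intro i j
    obtain ⟨c, hc⟩ := hPcol j
    have h1 : P i j = c := congrFun hc i
    have h2 : P i0 j = c := congrFun hc i0
    obtain ⟨c', hc'⟩ := hPcol i0
    have h3 : P j i0 = c' := congrFun hc' j
    have h4 : P i0 i0 = c' := congrFun hc' i0
    rw [h1, ← h2, hPsymm i0 j, h3, ← h4]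
  have hPr : P *ᵥ r = 0 := by
    funext i
    have h : (P *ᵥ r) i = ∑ j, P i0 i0 * r j := by
      simp only [Matrix.mulVec, dotProduct]
      exact Finset.sum_congr rfl fun j _ => by rw [hPconst i j]
    rw [h, ← Finset.mul_sum, hrsum, mul_zero]
    rfl
  have step1 : calL *ᵥ (calLplus *ᵥ r) = r := by
    rw [hPdef, Matrix.sub_mulVec, Matrix.one_mulVec, sub_eq_zero] at hPr
    rw [Matrix.mulVec_mulVec]
    exact hPr.symm
  -- Step 2: columns of Q := 1 - B * Bplus
  set Q : Matrix (Fin n) (Fin n) ℝ := 1 - B * Bplus with hQdef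
  have hQsymm : ∀ i j, Q i j = Q j i := by
    intro i j
    have hQT : Qᵀ = Q := by rw [hQdef, transpose_sub, transpose_one, hB3]
    have := congrFun (congrFun hQT i) j
    simpa [Matrix.transpose_apply] using this.symm
  have hBQ : Bᵀ * Q = 0 := by
    rw [hQdef, Matrix.mul_sub, mul_one]
    have h : Bᵀ * (B * Bplus) = Bᵀ := by
      calc Bᵀ * (B * Bplus) = Bᵀ * (B * Bplus)ᵀ := by rw [hB3]
        _ = ((B * Bplus) * B)ᵀ := (transpose_mul _ _).symm
        _ = Bᵀ := by rw [hB1]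
    rw [h, sub_self]
  have hQcol : ∀ j, ∃ c : ℝ, (fun i => Q i j) = c • pdist := by
    intro j
    apply hkerBT
    funext i
    have h : (Bᵀ * Q) i j = 0 := by rw [hBQ]; rfl
    simpa [Matrix.mulVec, Matrix.mul_apply, dotProduct] using h
  choose cq hcq using hQcol
  have hQent : ∀ i j, Q i j = cq j * pdist i := by
    intro i j
    have := congrFun (hcq j) i
    simpa using this
  have hQrel : ∀ i j, cq j * pdist i = cq i * pdist j := by
    intro i j
    rw [← hQent i j, hQsymm i j, hQent j i]
  -- s = Π⁻¹ r
  set s : Fin n → ℝ := fun i => (pdist i)⁻¹ * r i with hsdef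
  have hQs : Q *ᵥ s = 0 := by
    funext i
    have h : (Q *ᵥ s) i = ∑ j, cq i * r j := by
      simp only [Matrix.mulVec, dotProduct]
      refine Finset.sum_congr rfl fun j _ => ?_
      have hsj : s j = (pdist j)⁻¹ * r j := rfl
      rw [hsj, hQent i j, hQrel i j,
        show cq i * pdist j * ((pdist j)⁻¹ * r j)
          = cq i * (pdist j * (pdist j)⁻¹) * r j from by ring,
        mul_inv_cancel₀ (hpd j), mul_one]
    rw [h, ← Finset.mul_sum, hrsum, mul_zero]
    rfl
  have step2 : B *ᵥ (Bplus *ᵥ s) = s := by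
    rw [hQdef, Matrix.sub_mulVec, Matrix.one_mulVec, sub_eq_zero] at hQs
    rw [Matrix.mulVec_mulVec]
    exact hQs.symm
  -- Step 3: B *ᵥ (calLplus *ᵥ r) = s
  have step3 : B *ᵥ (calLplus *ᵥ r) = s := by
    have hdr : Matrix.diagonal pdist *ᵥ (B *ᵥ (calLplus *ᵥ r)) = r := by
      rw [Matrix.mulVec_mulVec, ← hcalL]
      exact step1
    funext i
    have h := congrFun hdr i
    rw [Matrix.mulVec_diagonal] at h
    show (B *ᵥ (calLplus *ᵥ r)) i = (pdist i)⁻¹ * r i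
    rw [← h, inv_mul_cancel_left₀ (hpd i)]
  -- R *ᵥ r = Bplus *ᵥ s
  have hRr : R *ᵥ r = Bplus *ᵥ s := by
    have hds : (Matrix.diagonal fun v => (pdist v)⁻¹) *ᵥ r = s := by
      funext i
      rw [Matrix.mulVec_diagonal]
    rw [hR, ← Matrix.mulVec_mulVec, hds]
  -- conclude
  have hdiff : B *ᵥ (calLplus *ᵥ r - R *ᵥ r) = 0 := by
    rw [Matrix.mulVec_sub, step3, hRr, step2, sub_self]
  obtain ⟨c, hc⟩ := (hker1 _).1 hdiff
  have hfin : p ⬝ᵥ (calLplus *ᵥ r) - p ⬝ᵥ (R *ᵥ r) = 0 := by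
    rw [← dotProduct_sub, hc]
    have h : (p ⬝ᵥ fun _ => c) = (∑ j, p j) * c := by
      simp [dotProduct, Finset.sum_mul]
    rw [h, hpsum0, zero_mul]
  linarith [hfin]
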